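/- Two frameworks in ℝ^d related by a projective transformation and the associated static Pogorelov map have corresponding equilibrium loads: if Φ is a projective transformation of ℝP^d mapping (Γ,p) into ℝ^d, and Φ^stat_p = h_L(p)² · dΦ_p where h_L(p) is the (signed) distance from p to the hyperplane L sent to infinity, then a load f on (Γ,p) is an equilibrium load if and only if Φ^stat ∘ f is an equilibrium load on (Γ, Φ∘p). -/

import Mathlib

open scoped Matrix

/-- The projective transformation of the affine chart `x₀ = 1` of `ℝP^d` induced by
`M ∈ GL(d+1, ℝ)`: apply `M` to `(1, x)` and renormalize the zeroth coordinate. -/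
noncomputable def projChart {d : ℕ} (M : Matrix (Fin (d + 1)) (Fin (d + 1)) ℝ)
    (x : Fin d → ℝ) : Fin d → ℝ :=
  fun k => M.mulVec (Fin.cons 1 x) k.succ / M.mulVec (Fin.cons 1 x) 0

/-- The signed distance from `x ∈ ℝ^d` to the hyperplane `L` sent to infinity by the
projective transformation induced by `M`, namely `L = {x | M.mulVec (1,x) 0 = 0}`. -/
noncomputable def signedDistToL {d : ℕ} (M : Matrix (Fin (d + 1)) (Fin (d + 1)) ℝ)
    (x : Fin d → ℝ) : ℝ :=
  M.mulVec (Fin.cons 1 x) 0 /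
    Real.sqrt ((fun k : Fin d => M 0 k.succ) ⬝ᵥ (fun k : Fin d => M 0 k.succ))

/-! ### Auxiliary lemmas -/

/-- The continuous linear part of `y ↦ M.mulVec (Fin.cons 1 y) j`. -/
noncomputable def ellPC {d : ℕ} (M : Matrix (Fin (d + 1)) (Fin (d + 1)) ℝ)
    (j : Fin (d + 1)) : (Fin d → ℝ) →L[ℝ] ℝ :=
  ∑ k : Fin d, M j k.succ • (ContinuousLinearMap.proj k : (Fin d → ℝ) →L[ℝ] ℝ)

lemma ellPC_apply {d : ℕ} (M : Matrix (Fin (d + 1)) (Fin (d + 1)) ℝ)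
    (j : Fin (d + 1)) (v : Fin d → ℝ) :
    ellPC M j v = M.mulVec (Fin.cons 0 v) j := by
  simp [ellPC, Matrix.mulVec, dotProduct, Fin.sum_univ_succ]

lemma mulVec_cons_eq {d : ℕ} (M : Matrix (Fin (d + 1)) (Fin (d + 1)) ℝ)
    (j : Fin (d + 1)) (x : Fin d → ℝ) :
    M.mulVec (Fin.cons 1 x) j = M j 0 + ellPC M j x := by
  simp [ellPC, Matrix.mulVec, dotProduct, Fin.sum_univ_succ]

lemma hasFDerivAt_g {d : ℕ} (M : Matrix (Fin (d + 1)) (Fin (d + 1)) ℝ)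
    (j : Fin (d + 1)) (x : Fin d → ℝ) :
    HasFDerivAt (fun y => M.mulVec (Fin.cons 1 y) j) (ellPC M j) x := by
  have : (fun y => M.mulVec (Fin.cons 1 y) j) = fun y => M j 0 + ellPC M j y := by
    funext y; exact mulVec_cons_eq M j y
  rw [this]
  exact ((ellPC M j).hasFDerivAt).const_add _

lemma fderiv_projChart {d : ℕ} (M : Matrix (Fin (d + 1)) (Fin (d + 1)) ℝ)
    (x : Fin d → ℝ) (hx : M.mulVec (Fin.cons 1 x) 0 ≠ 0) (v : Fin d → ℝ) (k : Fin d) :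
    fderiv ℝ (projChart M) x v k =
      (M.mulVec (Fin.cons 0 v) k.succ * M.mulVec (Fin.cons 1 x) 0
        - M.mulVec (Fin.cons 1 x) k.succ * M.mulVec (Fin.cons 0 v) 0)
        / (M.mulVec (Fin.cons 1 x) 0) ^ 2 := by
  set g : Fin (d + 1) → (Fin d → ℝ) → ℝ := fun j y => M.mulVec (Fin.cons 1 y) j with hg
  have hinv : HasFDerivAt (fun y => (g 0 y)⁻¹)
      ((-(g 0 x ^ 2)⁻¹) • ellPC M 0) x := by
    have h1 : HasDerivAt (fun t : ℝ => t⁻¹) (-(g 0 x ^ 2)⁻¹) (g 0 x) := hasDerivAt_inv hx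
    exact h1.comp_hasFDerivAt x (hasFDerivAt_g M 0 x)
  have hk : ∀ k : Fin d, HasFDerivAt (fun y => projChart M y k)
      ((g k.succ x) • ((-(g 0 x ^ 2)⁻¹) • ellPC M 0) + (g 0 x)⁻¹ • ellPC M k.succ) x := by
    intro k
    have hmul := (hasFDerivAt_g M k.succ x).mul hinv
    have : (fun y => projChart M y k) = fun y => g k.succ y * (g 0 y)⁻¹ := by
      funext y; simp [projChart, div_eq_mul_inv, hg]
    rw [this]
    exact hmul
  have hPhi : HasFDerivAt (projChart M)
      (ContinuousLinearMap.pi (fun k : Fin d =>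
        (g k.succ x) • ((-(g 0 x ^ 2)⁻¹) • ellPC M 0) + (g 0 x)⁻¹ • ellPC M k.succ)) x := by
    apply hasFDerivAt_pi.2
    exact hk
  rw [hPhi.fderiv]
  simp only [ContinuousLinearMap.pi_apply, ContinuousLinearMap.add_apply,
    ContinuousLinearMap.smul_apply, ellPC_apply, smul_eq_mul]
  simp only [hg]
  field_simp
  ring

lemma conjBiv {n : ℕ} (M : Matrix (Fin n) (Fin n) ℝ) (q w : Fin n → ℝ) :
    M * Matrix.vecMulVec q w * Mᵀ = Matrix.vecMulVec (M.mulVec q) (M.mulVec w) := by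
  ext a b
  have lhs_eq : (M * Matrix.vecMulVec q w * Mᵀ) a b
      = (∑ c, M a c * q c) * (∑ e, M b e * w e) := by
    simp only [Matrix.mul_apply, Matrix.vecMulVec_apply, Matrix.transpose_apply]
    rw [Finset.sum_mul_sum]
    rw [Finset.sum_comm]
    apply Finset.sum_congr rfl; intro e _
    rw [Finset.sum_mul]
    apply Finset.sum_congr rfl; intro c _
    ring
  rw [lhs_eq]
  simp [Matrix.vecMulVec_apply, Matrix.mulVec, dotProduct]

lemma equiMat {d : ℕ} {V : Type*} [Fintype V] (p f : V → Fin d → ℝ) :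
    ((∑ i, f i = 0) ∧
      (∀ k l : Fin d, ∑ i, (p i k * f i l - f i k * p i l) = 0)) ↔
    (∑ i, (Matrix.vecMulVec (Fin.cons 1 (p i)) (Fin.cons 0 (f i))
        - Matrix.vecMulVec (Fin.cons 0 (f i)) (Fin.cons 1 (p i)))) = 0 := by
  have hentry : ∀ a b : Fin (d + 1),
      (∑ i, (Matrix.vecMulVec (Fin.cons 1 (p i)) (Fin.cons 0 (f i))
        - Matrix.vecMulVec (Fin.cons 0 (f i)) (Fin.cons 1 (p i)))) a b =
      ∑ i, ((Fin.cons 1 (p i) : Fin (d+1) → ℝ) a * (Fin.cons 0 (f i) : Fin (d+1) → ℝ) b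
        - (Fin.cons 0 (f i) : Fin (d+1) → ℝ) a * (Fin.cons 1 (p i) : Fin (d+1) → ℝ) b) := by
    intro a b
    rw [Matrix.sum_apply]
    exact Finset.sum_congr rfl fun i _ => rfl
  constructor
  · rintro ⟨h1, h2⟩
    have h1' : ∀ l, ∑ i, f i l = 0 := by
      intro l
      have := congrFun h1 l
      rw [Finset.sum_apply] at this
      simpa using this
    ext a b
    rw [hentry]
    simp only [Matrix.zero_apply]
    refine Fin.cases ?_ (fun k => ?_) a
    · refine Fin.cases ?_ (fun l => ?_) b
      · simp
      · simpa [Fin.cons_zero, Fin.cons_succ] using h1' l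
    · refine Fin.cases ?_ (fun l => ?_) b
      · simpa [Fin.cons_zero, Fin.cons_succ] using h1' k
      · simpa [Fin.cons_succ] using h2 k l
  · intro h
    constructor
    · funext l
      have := congrFun (congrFun h 0) l.succ
      rw [hentry] at this
      simpa using this
    · intro k l
      have := congrFun (congrFun h k.succ) l.succ
      rw [hentry] at this
      simpa using this

/-- If `Φ` is a projective transformation of `ℝP^d` mapping the framework
`(Γ, p)` into `ℝ^d`, and `Φ^stat_x = h_L(x)² • dΦ_x` is the associated static Pogorelov
map (`h_L` the signed distance to the hyperplane `L` sent to infinity), then a load `f`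
on `(Γ, p)` is an equilibrium load if and only if `Φ^stat ∘ f` is an equilibrium load on
`(Γ, Φ ∘ p)`. -/
theorem static_pogorelov_projective_equilibrium
    {d : ℕ} {V : Type*} [Fintype V] (Γ : SimpleGraph V)
    (M : Matrix (Fin (d + 1)) (Fin (d + 1)) ℝ) (hM : IsUnit M.det)
    (hL : ¬ ∀ k : Fin d, M 0 k.succ = 0)
    (p : V → Fin d → ℝ)
    (hdom : ∀ i, M.mulVec (Fin.cons 1 (p i)) 0 ≠ 0)
    (f : V → Fin d → ℝ)
    (f' : V → Fin d → ℝ)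
    (hf' : ∀ i, f' i =
      (signedDistToL M (p i)) ^ 2 • fderiv ℝ (projChart M) (p i) (f i)) :
    ((∑ i, f i = 0) ∧
      (∀ k l : Fin d, ∑ i, (p i k * f i l - f i k * p i l) = 0)) ↔
    ((∑ i, f' i = 0) ∧
      (∀ k l : Fin d, ∑ i, (projChart M (p i) k * f' i l - f' i k * projChart M (p i) l)
        = 0)) := by
  classical
  set s2 : ℝ := (fun k : Fin d => M 0 k.succ) ⬝ᵥ (fun k : Fin d => M 0 k.succ) with hs2def
  -- positivity of s2
  have hs2pos : 0 < s2 := by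
    obtain ⟨k0, hk0⟩ := not_forall.mp hL
    have : s2 = ∑ k : Fin d, M 0 k.succ * M 0 k.succ := rfl
    rw [this]
    apply Finset.sum_pos' (fun k _ => mul_self_nonneg _)
    exact ⟨k0, Finset.mem_univ k0, mul_self_pos.mpr hk0⟩
  have hs2ne : s2 ≠ 0 := ne_of_gt hs2pos
  -- explicit formula for f'
  have hfk : ∀ i k, f' i k =
      (M.mulVec (Fin.cons 0 (f i)) k.succ * M.mulVec (Fin.cons 1 (p i)) 0
        - M.mulVec (Fin.cons 1 (p i)) k.succ * M.mulVec (Fin.cons 0 (f i)) 0) / s2 := by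
    intro i k
    rw [hf']
    have hfd := fderiv_projChart M (p i) (hdom i) (f i) k
    simp only [Pi.smul_apply, smul_eq_mul, hfd, signedDistToL, div_pow,
      Real.sq_sqrt hs2pos.le, ← hs2def]
    field_simp [hs2ne, hdom i]
  -- the two bivector sums
  set q : V → Fin (d + 1) → ℝ := fun i => Fin.cons 1 (p i) with hq
  set w : V → Fin (d + 1) → ℝ := fun i => Fin.cons 0 (f i) with hw
  set q' : V → Fin (d + 1) → ℝ := fun i => Fin.cons 1 (projChart M (p i)) with hq'
  set w' : V → Fin (d + 1) → ℝ := fun i => Fin.cons 0 (f' i) with hw'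
  set S : Matrix (Fin (d + 1)) (Fin (d + 1)) ℝ :=
    ∑ i, (Matrix.vecMulVec (q i) (w i) - Matrix.vecMulVec (w i) (q i)) with hS
  set S' : Matrix (Fin (d + 1)) (Fin (d + 1)) ℝ :=
    ∑ i, (Matrix.vecMulVec (q' i) (w' i) - Matrix.vecMulVec (w' i) (q' i)) with hS'
  -- pointwise key identity
  have hkey : ∀ i, Matrix.vecMulVec (M.mulVec (q i)) (M.mulVec (w i))
      - Matrix.vecMulVec (M.mulVec (w i)) (M.mulVec (q i))
      = s2 • (Matrix.vecMulVec (q' i) (w' i) - Matrix.vecMulVec (w' i) (q' i)) := by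
    intro i
    ext a b
    simp only [Matrix.sub_apply, Matrix.smul_apply, Matrix.vecMulVec_apply, smul_eq_mul]
    have hq0 : M.mulVec (q i) 0 = M.mulVec (Fin.cons 1 (p i)) 0 := rfl
    have hg0 := hdom i
    refine Fin.cases ?_ (fun k => ?_) a
    · refine Fin.cases ?_ (fun l => ?_) b
      · ring
      · simp only [hq, hw, hq', hw', Fin.cons_zero, Fin.cons_succ]
        rw [hfk i l]
        have : projChart M (p i) l =
            M.mulVec (Fin.cons 1 (p i)) l.succ / M.mulVec (Fin.cons 1 (p i)) 0 := rfl
        rw [this]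
        field_simp [hg0, hs2ne]
        try ring
    · refine Fin.cases ?_ (fun l => ?_) b
      · simp only [hq, hw, hq', hw', Fin.cons_zero, Fin.cons_succ]
        rw [hfk i k]
        have : projChart M (p i) k =
            M.mulVec (Fin.cons 1 (p i)) k.succ / M.mulVec (Fin.cons 1 (p i)) 0 := rfl
        rw [this]
        field_simp [hg0, hs2ne]
        try ring
      · simp only [hq, hw, hq', hw', Fin.cons_succ]
        rw [hfk i k, hfk i l]
        have hk : projChart M (p i) k =
            M.mulVec (Fin.cons 1 (p i)) k.succ / M.mulVec (Fin.cons 1 (p i)) 0 := rfl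
        have hl : projChart M (p i) l =
            M.mulVec (Fin.cons 1 (p i)) l.succ / M.mulVec (Fin.cons 1 (p i)) 0 := rfl
        rw [hk, hl]
        field_simp [hg0, hs2ne]
        try ring
  -- conjugation identity
  have hconj : M * S * Mᵀ = s2 • S' := by
    rw [hS, Finset.mul_sum, Finset.sum_mul, hS', Finset.smul_sum]
    apply Finset.sum_congr rfl
    intro i _
    rw [mul_sub, sub_mul, conjBiv, conjBiv]
    exact hkey i
  -- S = 0 ↔ S' = 0
  have hiff : S = 0 ↔ S' = 0 := by
    constructor
    · intro h
      have h0 : s2 • S' = 0 := by rw [← hconj, h, mul_zero, zero_mul]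
      rcases smul_eq_zero.mp h0 with h | h
      · exact absurd h hs2ne
      · exact h
    · intro h
      have h0 : M * S * Mᵀ = 0 := by rw [hconj, h, smul_zero]
      have hMT : IsUnit Mᵀ.det := by rwa [Matrix.det_transpose]
      calc S = M⁻¹ * (M * S * Mᵀ) * Mᵀ⁻¹ := by
              rw [Matrix.mul_assoc M S Mᵀ, ← Matrix.mul_assoc M⁻¹ M _,
                Matrix.nonsing_inv_mul M hM, Matrix.one_mul,
                Matrix.mul_assoc S Mᵀ Mᵀ⁻¹, Matrix.mul_nonsing_inv Mᵀ hMT,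
                Matrix.mul_one]
        _ = 0 := by rw [h0, Matrix.mul_zero, Matrix.zero_mul]
  -- assemble
  have E1 := equiMat p f
  have E2 := equiMat (fun i => projChart M (p i)) f'
  exact E1.trans (hiff.trans E2.symm)
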